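/- Let d ≥ 4 and let X be a finite nonempty set of 2-dimensional linear subspaces of ℝ^d that is B_d-invariant. Then X is an equal-weight tight 2-fusion frame (i.e. there is A > 0 with ∑_{W∈X}‖P_W x‖^4 = A‖x‖^4 for all x ∈ ℝ^d) if and only if ∑_{W∈X} ‖P_W e_1‖^4 = ∑_{W∈X} ‖P_W ((e_1+e_2)/√2)‖^4, where e_1, e_2 are the first two standard basis vectors of ℝ^d. -/

import Mathlib

open scoped BigOperators

/-- Orthogonal projection onto a subspace `V` of `ℝ^d`, as a linear endomorphism. -/
noncomputable def proj {d : ℕ} (V : Submodule ℝ (EuclideanSpace ℝ (Fin d))) :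
    EuclideanSpace ℝ (Fin d) →ₗ[ℝ] EuclideanSpace ℝ (Fin d) :=
  V.subtype ∘ₗ (Submodule.orthogonalProjection V).toLinearMap

/-- `g` is a signed permutation matrix: `g = diag(s)·σ` with `s ∈ {±1}^d` and `σ`
a permutation matrix (the hyperoctahedral group `B_d ⊆ O(d)`). -/
def IsSignedPerm {d : ℕ} (g : Matrix (Fin d) (Fin d) ℝ) : Prop :=
  ∃ (σ : Equiv.Perm (Fin d)) (s : Fin d → ℝ),
    (∀ i, s i = 1 ∨ s i = -1) ∧ ∀ i j, g i j = if i = σ j then s i else 0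

noncomputable section Stmt5Aux

open Finset

variable {d : ℕ}

/-- standard basis vector -/
def ev (i : Fin d) : EuclideanSpace ℝ (Fin d) := EuclideanSpace.single i 1

/-- the signed permutation as a linear equiv -/
def spLin (σ : Equiv.Perm (Fin d)) (s : Fin d → ℝ) (hs : ∀ i, s i = 1 ∨ s i = -1) :
    EuclideanSpace ℝ (Fin d) ≃ₗ[ℝ] EuclideanSpace ℝ (Fin d) where
  toFun x := (WithLp.equiv 2 (Fin d → ℝ)).symm fun i => s i * x (σ.symm i)
  invFun x := (WithLp.equiv 2 (Fin d → ℝ)).symm fun i => s (σ i) * x (σ i)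
  map_add' x y := by
    ext i
    simp [mul_add]
  map_smul' c x := by
    ext i
    simp [mul_comm, mul_assoc, mul_left_comm]
  left_inv x := by
    ext i
    show s (σ i) * (s (σ i) * x (σ.symm (σ i))) = x i
    rw [Equiv.symm_apply_apply]
    rcases hs (σ i) with h | h <;> rw [h] <;> ring
  right_inv x := by
    ext i
    show s i * (s (σ (σ.symm i)) * x (σ (σ.symm i))) = x i
    rw [Equiv.apply_symm_apply]
    rcases hs i with h | h <;> rw [h] <;> ring

lemma spLin_apply (σ : Equiv.Perm (Fin d)) (s : Fin d → ℝ) (hs : ∀ i, s i = 1 ∨ s i = -1)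
    (x : EuclideanSpace ℝ (Fin d)) (i : Fin d) :
    spLin σ s hs x i = s i * x (σ.symm i) := rfl

lemma spLin_inner (σ : Equiv.Perm (Fin d)) (s : Fin d → ℝ) (hs : ∀ i, s i = 1 ∨ s i = -1)
    (x y : EuclideanSpace ℝ (Fin d)) :
    (inner ℝ (spLin σ s hs x) (spLin σ s hs y) : ℝ) = inner ℝ x y := by
  rw [PiLp.inner_apply, PiLp.inner_apply]
  rw [← Equiv.sum_comp σ.symm (fun j => (inner ℝ (x j) (y j) : ℝ))]
  refine Finset.sum_congr rfl fun i _ => ?_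
  rcases hs i with h | h <;>
    simp [spLin_apply, h, RCLike.inner_apply, conj_trivial]

/-- the signed permutation as a linear isometry equivalence -/
def spIso (σ : Equiv.Perm (Fin d)) (s : Fin d → ℝ) (hs : ∀ i, s i = 1 ∨ s i = -1) :
    EuclideanSpace ℝ (Fin d) ≃ₗᵢ[ℝ] EuclideanSpace ℝ (Fin d) :=
  (spLin σ s hs).isometryOfInner (spLin_inner σ s hs)

lemma spIso_apply (σ : Equiv.Perm (Fin d)) (s : Fin d → ℝ) (hs : ∀ i, s i = 1 ∨ s i = -1)
    (x : EuclideanSpace ℝ (Fin d)) (i : Fin d) :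
    spIso σ s hs x i = s i * x (σ.symm i) := rfl

lemma toEuclideanLin_eq_spIso (σ : Equiv.Perm (Fin d)) (s : Fin d → ℝ)
    (hs : ∀ i, s i = 1 ∨ s i = -1) (g : Matrix (Fin d) (Fin d) ℝ)
    (hg : ∀ i j, g i j = if i = σ j then s i else 0) :
    Matrix.toEuclideanLin g
      = ((spIso σ s hs).toLinearEquiv : EuclideanSpace ℝ (Fin d) →ₗ[ℝ] EuclideanSpace ℝ (Fin d)) := by
  apply LinearMap.ext
  intro x
  ext i
  have hrhs : (((spIso σ s hs).toLinearEquiv :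
      EuclideanSpace ℝ (Fin d) →ₗ[ℝ] EuclideanSpace ℝ (Fin d)) x) i
      = s i * x (σ.symm i) := rfl
  rw [hrhs]
  have hlhs : Matrix.toEuclideanLin g x i
      = ∑ j, g i j * x j := rfl
  rw [hlhs]
  have : ∀ j, g i j * x j = if j = σ.symm i then s i * x j else 0 := by
    intro j
    rw [hg i j]
    by_cases h : i = σ j
    · rw [if_pos h, if_pos (((Equiv.symm_apply_eq σ).mpr h).symm)]
    · rw [if_neg h, if_neg (fun hj => h (by rw [hj, Equiv.apply_symm_apply])), zero_mul]
  rw [Finset.sum_congr rfl fun j _ => this j, Finset.sum_ite_eq' Finset.univ (σ.symm i)]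
  simp

end Stmt5Aux

section Chunk2

open Finset

variable {d : ℕ}

lemma proj_apply (V : Submodule ℝ (EuclideanSpace ℝ (Fin d))) (x : EuclideanSpace ℝ (Fin d)) :
    proj V x = (V.orthogonalProjectionOnto x : EuclideanSpace ℝ (Fin d)) := rfl

/-- matrix entries of the projection onto `W` -/
noncomputable def rr (W : Submodule ℝ (EuclideanSpace ℝ (Fin d))) (i j : Fin d) : ℝ :=
  inner ℝ (ev i) (proj W (ev j))

lemma rr_symm (W : Submodule ℝ (EuclideanSpace ℝ (Fin d))) (i j : Fin d) :
    rr W i j = rr W j i := by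
  unfold rr
  rw [proj_apply, proj_apply, Submodule.coe_orthogonalProjectionOnto_apply,
    Submodule.coe_orthogonalProjectionOnto_apply, ← Submodule.inner_starProjection_left_eq_right]
  exact real_inner_comm _ _

lemma norm_proj_sq (W : Submodule ℝ (EuclideanSpace ℝ (Fin d))) (x : EuclideanSpace ℝ (Fin d)) :
    ‖proj W x‖ ^ 2 = (inner ℝ x (proj W x) : ℝ) := by
  rw [proj_apply]
  have h0 : (inner ℝ (x - (W.orthogonalProjectionOnto x : EuclideanSpace ℝ (Fin d)))
      ((W.orthogonalProjectionOnto x : EuclideanSpace ℝ (Fin d))) : ℝ) = 0 := by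
    apply Submodule.inner_left_of_mem_orthogonal (W.orthogonalProjectionOnto x).2
    exact Submodule.sub_starProjection_mem_orthogonal x
  have : (inner ℝ x ((W.orthogonalProjectionOnto x : EuclideanSpace ℝ (Fin d))) : ℝ)
      = inner ℝ ((W.orthogonalProjectionOnto x : EuclideanSpace ℝ (Fin d)))
          ((W.orthogonalProjectionOnto x : EuclideanSpace ℝ (Fin d))) := by
    have := inner_sub_left (𝕜 := ℝ) x ((W.orthogonalProjectionOnto x : EuclideanSpace ℝ (Fin d)))
      ((W.orthogonalProjectionOnto x : EuclideanSpace ℝ (Fin d)))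
    rw [h0] at this
    linarith [this]
  rw [this, real_inner_self_eq_norm_sq]

lemma quad_expand (W : Submodule ℝ (EuclideanSpace ℝ (Fin d))) (x : EuclideanSpace ℝ (Fin d)) :
    (inner ℝ x (proj W x) : ℝ) = ∑ i, ∑ j, x i * x j * rr W i j := by
  have hx : x = ∑ i : Fin d, x i • ev i := by
    ext j
    have : (∑ i : Fin d, x i • ev i) j = ∑ i : Fin d, (x i • ev i) j := by
      rw [WithLp.ofLp_sum]; exact Finset.sum_apply j Finset.univ _
    rw [this]
    simp [ev, EuclideanSpace.single_apply]
  conv_lhs => rw [hx]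
  rw [map_sum, inner_sum]
  have key : ∀ j, (inner ℝ (∑ i : Fin d, x i • ev i) (proj W (x j • ev j)) : ℝ)
      = ∑ i, x i * x j * rr W i j := by
    intro j
    rw [sum_inner]
    refine Finset.sum_congr rfl fun i _ => ?_
    rw [map_smul, real_inner_smul_left, real_inner_smul_right]
    unfold rr; ring
  rw [Finset.sum_congr rfl fun j _ => key j, Finset.sum_comm]

end Chunk2

section Chunk3
open Finset
variable {d : ℕ}

lemma spIso_symm_apply (σ : Equiv.Perm (Fin d)) (s : Fin d → ℝ) (hs : ∀ i, s i = 1 ∨ s i = -1)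
    (x : EuclideanSpace ℝ (Fin d)) (i : Fin d) :
    (spIso σ s hs).symm x i = s (σ i) * x (σ i) := rfl

lemma spIso_symm_ev (σ : Equiv.Perm (Fin d)) (s : Fin d → ℝ) (hs : ∀ i, s i = 1 ∨ s i = -1)
    (j : Fin d) : (spIso σ s hs).symm (ev j) = s j • ev (σ.symm j) := by
  ext k
  rw [spIso_symm_apply]
  show s (σ k) * (EuclideanSpace.single j 1 : EuclideanSpace ℝ (Fin d)) (σ k)
    = (s j • (EuclideanSpace.single (σ.symm j) 1 : EuclideanSpace ℝ (Fin d))) k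
  rw [EuclideanSpace.single_apply]
  rw [PiLp.smul_apply, EuclideanSpace.single_apply]
  by_cases h : k = σ.symm j
  · subst h
    simp [Equiv.apply_symm_apply]
  · have h2 : ¬(σ k = j) := fun hh => h (by rw [← hh, Equiv.symm_apply_apply])
    simp [h, h2]

lemma rr_map (σ : Equiv.Perm (Fin d)) (s : Fin d → ℝ) (hs : ∀ i, s i = 1 ∨ s i = -1)
    (W : Submodule ℝ (EuclideanSpace ℝ (Fin d))) (i j : Fin d) :
    rr (W.map (((spIso σ s hs).toLinearEquiv :
        EuclideanSpace ℝ (Fin d) →ₗ[ℝ] EuclideanSpace ℝ (Fin d)))) i j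
      = (s i * s j) * rr W (σ.symm i) (σ.symm j) := by
  set f := spIso σ s hs with hf
  unfold rr
  rw [proj_apply, proj_apply]
  rw [Submodule.coe_orthogonalProjectionOnto_apply, Submodule.coe_orthogonalProjectionOnto_apply]
  rw [Submodule.starProjection_map_apply (𝕜 := ℝ) f W (ev j)]
  rw [← f.apply_symm_apply (ev i), f.inner_map_map]
  rw [spIso_symm_ev, spIso_symm_ev]
  rw [map_smul, real_inner_smul_left, real_inner_smul_right]
  ring

end Chunk3

section Chunk4
open Finset
variable {d : ℕ}

/-- the coefficient tensor -/
noncomputable def TT (X : Finset (Submodule ℝ (EuclideanSpace ℝ (Fin d))))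
    (i j k l : Fin d) : ℝ :=
  ∑ W ∈ X, rr W i j * rr W k l

lemma TT_transform (X : Finset (Submodule ℝ (EuclideanSpace ℝ (Fin d))))
    (hinv : ∀ g : Matrix (Fin d) (Fin d) ℝ, IsSignedPerm g →
      ∀ W ∈ X, Submodule.map (Matrix.toEuclideanLin g) W ∈ X)
    (σ : Equiv.Perm (Fin d)) (s : Fin d → ℝ) (hs : ∀ i, s i = 1 ∨ s i = -1)
    (i j k l : Fin d) :
    TT X i j k l
      = (s i * s j * s k * s l) * TT X (σ.symm i) (σ.symm j) (σ.symm k) (σ.symm l) := by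
  classical
  set fL : EuclideanSpace ℝ (Fin d) →ₗ[ℝ] EuclideanSpace ℝ (Fin d) :=
    ((spIso σ s hs).toLinearEquiv :
      EuclideanSpace ℝ (Fin d) →ₗ[ℝ] EuclideanSpace ℝ (Fin d)) with hfL
  have hs' : ∀ i, (s ∘ σ) i = 1 ∨ (s ∘ σ) i = -1 := fun i => hs (σ i)
  set fL' : EuclideanSpace ℝ (Fin d) →ₗ[ℝ] EuclideanSpace ℝ (Fin d) :=
    ((spIso σ.symm (s ∘ σ) hs').toLinearEquiv :
      EuclideanSpace ℝ (Fin d) →ₗ[ℝ] EuclideanSpace ℝ (Fin d)) with hfL'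
  have hmem : ∀ W ∈ X, W.map fL ∈ X := by
    intro W hW
    have := hinv (fun i j => if i = σ j then s i else 0) ⟨σ, s, hs, fun _ _ => rfl⟩ W hW
    rwa [toEuclideanLin_eq_spIso σ s hs _ (fun _ _ => rfl)] at this
  have hmem' : ∀ W ∈ X, W.map fL' ∈ X := by
    intro W hW
    have := hinv (fun i j => if i = σ.symm j then (s ∘ σ) i else 0)
      ⟨σ.symm, s ∘ σ, hs', fun _ _ => rfl⟩ W hW
    rwa [toEuclideanLin_eq_spIso σ.symm (s ∘ σ) hs' _ (fun _ _ => rfl)] at this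
  have hcomp : ∀ W : Submodule ℝ (EuclideanSpace ℝ (Fin d)), (W.map fL).map fL' = W := by
    intro W
    rw [← Submodule.map_comp]
    have : fL'.comp fL = LinearMap.id := by
      apply LinearMap.ext
      intro x
      ext k
      show (s ∘ σ) k * (spIso σ s hs x) (σ.symm.symm k) = x k
      rw [Equiv.symm_symm]
      rw [spIso_apply]
      rw [Equiv.symm_apply_apply]
      rcases hs (σ k) with h | h <;> rw [Function.comp_apply, h] <;> ring
    rw [this, Submodule.map_id]
  have hcomp' : ∀ W : Submodule ℝ (EuclideanSpace ℝ (Fin d)), (W.map fL').map fL = W := by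
    intro W
    rw [← Submodule.map_comp]
    have : fL.comp fL' = LinearMap.id := by
      apply LinearMap.ext
      intro x
      ext k
      show s k * (spIso σ.symm (s ∘ σ) hs' x) (σ.symm k) = x k
      rw [spIso_apply, Equiv.symm_symm, Equiv.apply_symm_apply, Function.comp_apply,
        Equiv.apply_symm_apply]
      rcases hs k with h | h <;> rw [h] <;> ring
    rw [this, Submodule.map_id]
  unfold TT
  rw [Finset.mul_sum]
  refine Finset.sum_bij' (fun W _ => W.map fL') (fun W _ => W.map fL) hmem' hmem
    (fun W hW => hcomp' W) (fun W hW => hcomp W) ?_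
  intro W hW
  have h1 := rr_map σ.symm (s ∘ σ) hs' W (σ.symm i) (σ.symm j)
  have h2 := rr_map σ.symm (s ∘ σ) hs' W (σ.symm k) (σ.symm l)
  simp only [Equiv.symm_symm, Equiv.apply_symm_apply, Function.comp_apply] at h1 h2
  show rr W i j * rr W k l = s i * s j * s k * s l *
    (rr (W.map fL') (σ.symm i) (σ.symm j) * rr (W.map fL') (σ.symm k) (σ.symm l))
  rw [hfL', h1, h2]
  rcases hs i with hi | hi <;> rcases hs j with hj | hj <;>
    rcases hs k with hk | hk <;> rcases hs l with hl | hl <;>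
    rw [hi, hj, hk, hl] <;> ring

end Chunk4

lemma sum4 {d : ℕ} (x : Fin d → ℝ) (α β γ : ℝ) :
    ∑ i, ∑ j, ∑ k, ∑ l, x i * x j * x k * x l *
      (α * ((if i = j then (1:ℝ) else 0) * (if k = l then (1:ℝ) else 0))
       + β * ((if i = k then (1:ℝ) else 0) * (if j = l then (1:ℝ) else 0))
       + β * ((if i = l then (1:ℝ) else 0) * (if j = k then (1:ℝ) else 0))
       + γ * ((if i = j then (1:ℝ) else 0) * ((if i = k then (1:ℝ) else 0) * (if i = l then (1:ℝ) else 0))))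
    = (α + 2*β) * (∑ i, x i^2)^2 + γ * ∑ i, x i^4 := by
  have hrhs : (∑ i, x i^2)^2 = ∑ i, ∑ k, x i^2 * x k^2 := by
    rw [sq, Finset.sum_mul_sum]
  rw [hrhs]
  simp only [mul_add, Finset.sum_add_distrib, mul_ite, ite_mul, mul_zero, zero_mul,
    mul_one, one_mul, Finset.sum_ite_irrel, Finset.sum_const_zero, Finset.sum_ite_eq,
    Finset.sum_ite_eq', Finset.mem_univ, if_true]
  have e1 : ∀ c : ℝ, ∑ i : Fin d, ∑ k : Fin d, x i * x i * x k * x k * c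
      = c * ∑ i : Fin d, ∑ k : Fin d, x i ^ 2 * x k ^ 2 := by
    intro c
    rw [Finset.mul_sum]
    refine Finset.sum_congr rfl fun i _ => ?_
    rw [Finset.mul_sum]
    exact Finset.sum_congr rfl fun k _ => by ring
  have e2 : ∀ c : ℝ, ∑ i : Fin d, ∑ k : Fin d, x i * x k * x i * x k * c
      = c * ∑ i : Fin d, ∑ k : Fin d, x i ^ 2 * x k ^ 2 := by
    intro c
    rw [Finset.mul_sum]
    refine Finset.sum_congr rfl fun i _ => ?_
    rw [Finset.mul_sum]
    exact Finset.sum_congr rfl fun k _ => by ring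
  have e3 : ∀ c : ℝ, ∑ i : Fin d, ∑ k : Fin d, x i * x k * x k * x i * c
      = c * ∑ i : Fin d, ∑ k : Fin d, x i ^ 2 * x k ^ 2 := by
    intro c
    rw [Finset.mul_sum]
    refine Finset.sum_congr rfl fun i _ => ?_
    rw [Finset.mul_sum]
    exact Finset.sum_congr rfl fun k _ => by ring
  have e4 : ∑ i : Fin d, x i * x i * x i * x i * γ = γ * ∑ i : Fin d, x i ^ 4 := by
    rw [Finset.mul_sum]
    exact Finset.sum_congr rfl fun i _ => by ring
  rw [e1 α, e2 β, e3 β, e4]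
  ring

section Chunk5
open Finset
variable {d : ℕ}
variable (X : Finset (Submodule ℝ (EuclideanSpace ℝ (Fin d))))
variable (hinv : ∀ g : Matrix (Fin d) (Fin d) ℝ, IsSignedPerm g →
      ∀ W ∈ X, Submodule.map (Matrix.toEuclideanLin g) W ∈ X)

include hinv

lemma TT_zero (i j k l m : Fin d)
    (h : ((if i = m then (-1:ℝ) else 1) * (if j = m then (-1:ℝ) else 1) *
      (if k = m then (-1:ℝ) else 1) * (if l = m then (-1:ℝ) else 1)) = -1) :
    TT X i j k l = 0 := by
  have hs : ∀ t : Fin d, (if t = m then (-1:ℝ) else 1) = 1 ∨ (if t = m then (-1:ℝ) else 1) = -1 := by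
    intro t
    by_cases ht : t = m
    · right; rw [if_pos ht]
    · left; rw [if_neg ht]
  have := TT_transform X hinv (Equiv.refl (Fin d)) (fun t => if t = m then (-1:ℝ) else 1) hs i j k l
  simp only [Equiv.refl_symm, Equiv.refl_apply] at this
  rw [h] at this
  linarith

lemma TT_perm (σ : Equiv.Perm (Fin d)) (i j k l : Fin d) :
    TT X (σ i) (σ j) (σ k) (σ l) = TT X i j k l := by
  have := TT_transform X hinv σ (fun _ => 1) (fun _ => Or.inl rfl) (σ i) (σ j) (σ k) (σ l)
  simpa [Equiv.symm_apply_apply] using this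

omit hinv in
lemma exists_perm2 (a b i j : Fin d) (hab : a ≠ b) (hij : i ≠ j) :
    ∃ σ : Equiv.Perm (Fin d), σ a = i ∧ σ b = j := by
  classical
  set τ : Equiv.Perm (Fin d) := Equiv.swap a i with hτ
  have hτa : τ a = i := Equiv.swap_apply_left a i
  have hne : τ.symm j ≠ a := by
    intro hcon
    apply hij
    rw [← hτa, ← hcon, Equiv.apply_symm_apply]
  refine ⟨τ * Equiv.swap b (τ.symm j), ?_, ?_⟩
  · have : Equiv.swap b (τ.symm j) a = a :=
      Equiv.swap_apply_of_ne_of_ne hab (fun hc => hne hc.symm)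
    simp only [Equiv.Perm.mul_apply, this, hτa]
  · simp only [Equiv.Perm.mul_apply, Equiv.swap_apply_left, Equiv.apply_symm_apply]

lemma TT_diag (a i : Fin d) : TT X i i i i = TT X a a a a := by
  have := TT_perm X hinv (Equiv.swap a i) a a a a
  rwa [Equiv.swap_apply_left] at this

lemma TT_pair (a b i j : Fin d) (hab : a ≠ b) (hij : i ≠ j) :
    TT X i i j j = TT X a a b b ∧ TT X i j i j = TT X a b a b := by
  obtain ⟨σ, hσa, hσb⟩ := exists_perm2 a b i j hab hij
  constructor
  · have := TT_perm X hinv σ a a b b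
    rwa [hσa, hσb] at this
  · have := TT_perm X hinv σ a b a b
    rwa [hσa, hσb] at this

end Chunk5

section Chunk6
open Finset
variable {d : ℕ}
variable (X : Finset (Submodule ℝ (EuclideanSpace ℝ (Fin d))))
variable (hinv : ∀ g : Matrix (Fin d) (Fin d) ℝ, IsSignedPerm g →
      ∀ W ∈ X, Submodule.map (Matrix.toEuclideanLin g) W ∈ X)

include hinv

lemma TT_eq (a b : Fin d) (hab : a ≠ b) (i j k l : Fin d) :
    TT X i j k l =
      TT X a a b b * ((if i = j then (1:ℝ) else 0) * (if k = l then (1:ℝ) else 0))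
      + TT X a b a b * ((if i = k then (1:ℝ) else 0) * (if j = l then (1:ℝ) else 0))
      + TT X a b a b * ((if i = l then (1:ℝ) else 0) * (if j = k then (1:ℝ) else 0))
      + (TT X a a a a - TT X a a b b - 2 * TT X a b a b) *
          ((if i = j then (1:ℝ) else 0) * ((if i = k then (1:ℝ) else 0) *
            (if i = l then (1:ℝ) else 0))) := by
  by_cases hij : i = j
  · subst hij
    by_cases hkl : k = l
    · subst hkl
      by_cases hik : i = k
      · subst hik
        rw [TT_diag X hinv a i]
        simp
        ring
      · rw [(TT_pair X hinv a b i k hab hik).1]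
        simp [hik]
    · by_cases hik : i = k
      · subst hik
        have hz : TT X i i i l = 0 := by
          apply TT_zero X hinv i i i l l
          have h1 : i ≠ l := hkl
          simp [h1]
        rw [hz]
        simp [hkl, fun h : i = l => hkl h]
      · have hz : TT X i i k l = 0 := by
          apply TT_zero X hinv i i k l k
          have h1 : i ≠ k := hik
          have h2 : l ≠ k := fun h => hkl h.symm
          simp [h1, h2]
        rw [hz]
        simp [hkl, hik, fun h : i = k => hik h]
  · by_cases hik : i = k
    · subst hik
      by_cases hjl : j = l
      · subst hjl
        rw [(TT_pair X hinv a b i j hab hij).2]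
        simp [hij, fun h : i = j => hij h]
      · have hz : TT X i j i l = 0 := by
          apply TT_zero X hinv i j i l j
          have h1 : i ≠ j := hij
          have h2 : l ≠ j := fun h => hjl h.symm
          simp [h1, h2]
        rw [hz]
        by_cases hil : i = l
        · have hjk : ¬ (j = i) := fun h => hij h.symm
          simp [hij, hjl, hjk]
        · simp [hij, hjl, hil]
    · by_cases hil : i = l
      · subst hil
        by_cases hjk : j = k
        · subst hjk
          have hswap : TT X i j j i = TT X i j i j := by
            unfold TT
            refine Finset.sum_congr rfl fun W _ => ?_
            rw [rr_symm W j i]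
          rw [hswap, (TT_pair X hinv a b i j hab hij).2]
          have h1 : ¬ (i = j) := hij
          simp [h1]
        · have hz : TT X i j k i = 0 := by
            apply TT_zero X hinv i j k i j
            have h1 : i ≠ j := hij
            have h2 : k ≠ j := fun h => hjk h.symm
            simp [h1, h2]
          rw [hz]
          have h3 : ¬ (j = i) := fun h => hij h.symm
          simp [hij, hjk, h3]
      · have hz : TT X i j k l = 0 := by
          apply TT_zero X hinv i j k l i
          have h1 : j ≠ i := fun h => hij h.symm
          have h2 : k ≠ i := fun h => hik h.symm
          have h3 : l ≠ i := fun h => hil h.symm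
          simp [h1, h2, h3]
        rw [hz]
        simp [hij, hik, hil]

end Chunk6

section Chunk7
open Finset
variable {d : ℕ}
variable (X : Finset (Submodule ℝ (EuclideanSpace ℝ (Fin d))))
variable (hinv : ∀ g : Matrix (Fin d) (Fin d) ℝ, IsSignedPerm g →
      ∀ W ∈ X, Submodule.map (Matrix.toEuclideanLin g) W ∈ X)

include hinv

lemma master (a b : Fin d) (hab : a ≠ b) (x : EuclideanSpace ℝ (Fin d)) :
    ∑ W ∈ X, ‖proj W x‖ ^ 4
      = (TT X a a b b + 2 * TT X a b a b) * (∑ i, x i ^ 2) ^ 2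
        + (TT X a a a a - TT X a a b b - 2 * TT X a b a b) * ∑ i, x i ^ 4 := by
  have h4 : ∀ W : Submodule ℝ (EuclideanSpace ℝ (Fin d)),
      ‖proj W x‖ ^ 4 = (∑ i, ∑ j, x i * x j * rr W i j) ^ 2 := by
    intro W
    have h42 : (4 : ℕ) = 2 * 2 := rfl
    rw [h42, pow_mul, norm_proj_sq, quad_expand]
  calc ∑ W ∈ X, ‖proj W x‖ ^ 4
      = ∑ W ∈ X, ∑ i, ∑ k, ∑ j, ∑ l,
          (x i * x j * rr W i j) * (x k * x l * rr W k l) := by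
        refine Finset.sum_congr rfl fun W _ => ?_
        rw [h4 W, sq, Finset.sum_mul_sum]
        refine Finset.sum_congr rfl fun i _ => ?_
        refine Finset.sum_congr rfl fun k _ => ?_
        rw [Finset.sum_mul_sum]
    _ = ∑ i, ∑ k, ∑ j, ∑ l, ∑ W ∈ X,
          (x i * x j * rr W i j) * (x k * x l * rr W k l) := by
        rw [Finset.sum_comm]
        refine Finset.sum_congr rfl fun i _ => ?_
        rw [Finset.sum_comm]
        refine Finset.sum_congr rfl fun k _ => ?_
        rw [Finset.sum_comm]
        refine Finset.sum_congr rfl fun j _ => ?_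
        rw [Finset.sum_comm]
    _ = ∑ i, ∑ j, ∑ k, ∑ l, ∑ W ∈ X,
          (x i * x j * rr W i j) * (x k * x l * rr W k l) := by
        refine Finset.sum_congr rfl fun i _ => ?_
        rw [Finset.sum_comm]
    _ = ∑ i, ∑ j, ∑ k, ∑ l, x i * x j * x k * x l * TT X i j k l := by
        refine Finset.sum_congr rfl fun i _ => ?_
        refine Finset.sum_congr rfl fun j _ => ?_
        refine Finset.sum_congr rfl fun k _ => ?_
        refine Finset.sum_congr rfl fun l _ => ?_
        unfold TT
        rw [Finset.mul_sum]
        exact Finset.sum_congr rfl fun W _ => by ring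
    _ = ∑ i, ∑ j, ∑ k, ∑ l, x i * x j * x k * x l *
          (TT X a a b b * ((if i = j then (1:ℝ) else 0) * (if k = l then (1:ℝ) else 0))
          + TT X a b a b * ((if i = k then (1:ℝ) else 0) * (if j = l then (1:ℝ) else 0))
          + TT X a b a b * ((if i = l then (1:ℝ) else 0) * (if j = k then (1:ℝ) else 0))
          + (TT X a a a a - TT X a a b b - 2 * TT X a b a b) *
              ((if i = j then (1:ℝ) else 0) * ((if i = k then (1:ℝ) else 0) *
                (if i = l then (1:ℝ) else 0)))) := by
        refine Finset.sum_congr rfl fun i _ => ?_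
        refine Finset.sum_congr rfl fun j _ => ?_
        refine Finset.sum_congr rfl fun k _ => ?_
        refine Finset.sum_congr rfl fun l _ => ?_
        rw [TT_eq X hinv a b hab i j k l]
    _ = (TT X a a b b + 2 * TT X a b a b) * (∑ i, x i ^ 2) ^ 2
        + (TT X a a a a - TT X a a b b - 2 * TT X a b a b) * ∑ i, x i ^ 4 := by
        rw [sum4]

end Chunk7

section Chunk8
open Finset
variable {d : ℕ}

lemma basis_expand (x : EuclideanSpace ℝ (Fin d)) : x = ∑ i : Fin d, x i • ev i := by
  ext j
  have : (∑ i : Fin d, x i • ev i) j = ∑ i : Fin d, (x i • ev i) j :=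
    by rw [WithLp.ofLp_sum]; exact Finset.sum_apply j Finset.univ _
  rw [this]
  simp [ev, EuclideanSpace.single_apply]

lemma norm_sq_eq (x : EuclideanSpace ℝ (Fin d)) : ‖x‖ ^ 2 = ∑ i, x i ^ 2 := by
  rw [← real_inner_self_eq_norm_sq, PiLp.inner_apply]
  refine Finset.sum_congr rfl fun i _ => ?_
  simp [RCLike.inner_apply, sq]

lemma sum_pow_ev (a : Fin d) (n : ℕ) (hn : n ≠ 0) : ∑ i, (ev a i) ^ n = 1 := by
  have h : ∀ i, (ev a i) ^ n = if i = a then 1 else 0 := by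
    intro i
    by_cases hh : i = a <;> simp [ev, EuclideanSpace.single_apply, hh, zero_pow hn]
  rw [Finset.sum_congr rfl fun i _ => h i, Finset.sum_ite_eq' Finset.univ a]
  simp

lemma sum_sq_u (a b : Fin d) (hab : a ≠ b) :
    ∑ i, (((Real.sqrt 2)⁻¹ • (ev a + ev b) : EuclideanSpace ℝ (Fin d)) i) ^ 2 = 1 := by
  have hsq : ((Real.sqrt 2)⁻¹ : ℝ) ^ 2 = 1 / 2 := by
    rw [inv_pow, Real.sq_sqrt (by norm_num : (2:ℝ) ≥ 0)]
    norm_num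
  have h : ∀ i, (((Real.sqrt 2)⁻¹ • (ev a + ev b) : EuclideanSpace ℝ (Fin d)) i) ^ 2
      = (if i = a then (1:ℝ)/2 else 0) + (if i = b then (1:ℝ)/2 else 0) := by
    intro i
    have happ : (((Real.sqrt 2)⁻¹ • (ev a + ev b) : EuclideanSpace ℝ (Fin d)) i)
        = (Real.sqrt 2)⁻¹ * ((if i = a then (1:ℝ) else 0) + (if i = b then (1:ℝ) else 0)) := by
      simp [ev, EuclideanSpace.single_apply, mul_add]
    rw [happ, mul_pow, hsq]
    by_cases h0 : i = a
    · subst h0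
      rw [if_pos rfl, if_neg hab, if_pos rfl, if_neg hab]
      norm_num
    · by_cases h1 : i = b
      · subst h1
        rw [if_neg h0, if_pos rfl, if_neg h0, if_pos rfl]
        norm_num
      · rw [if_neg h0, if_neg h1, if_neg h0, if_neg h1]
        norm_num
  rw [Finset.sum_congr rfl fun i _ => h i, Finset.sum_add_distrib,
    Finset.sum_ite_eq' Finset.univ a, Finset.sum_ite_eq' Finset.univ b]
  norm_num

lemma sum_pow4_u (a b : Fin d) (hab : a ≠ b) :
    ∑ i, (((Real.sqrt 2)⁻¹ • (ev a + ev b) : EuclideanSpace ℝ (Fin d)) i) ^ 4 = 1 / 2 := by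
  have hsq : ((Real.sqrt 2)⁻¹ : ℝ) ^ 4 = 1 / 4 := by
    have h42 : (4 : ℕ) = 2 * 2 := rfl
    rw [h42, pow_mul, inv_pow, Real.sq_sqrt (by norm_num : (2:ℝ) ≥ 0)]
    norm_num
  have h : ∀ i, (((Real.sqrt 2)⁻¹ • (ev a + ev b) : EuclideanSpace ℝ (Fin d)) i) ^ 4
      = (if i = a then (1:ℝ)/4 else 0) + (if i = b then (1:ℝ)/4 else 0) := by
    intro i
    have happ : (((Real.sqrt 2)⁻¹ • (ev a + ev b) : EuclideanSpace ℝ (Fin d)) i)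
        = (Real.sqrt 2)⁻¹ * ((if i = a then (1:ℝ) else 0) + (if i = b then (1:ℝ) else 0)) := by
      simp [ev, EuclideanSpace.single_apply, mul_add]
    rw [happ, mul_pow, hsq]
    by_cases h0 : i = a
    · subst h0
      rw [if_pos rfl, if_neg hab, if_pos rfl, if_neg hab]
      norm_num
    · by_cases h1 : i = b
      · subst h1
        rw [if_neg h0, if_pos rfl, if_neg h0, if_pos rfl]
        norm_num
      · rw [if_neg h0, if_neg h1, if_neg h0, if_neg h1]
        norm_num
  rw [Finset.sum_congr rfl fun i _ => h i, Finset.sum_add_distrib,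
    Finset.sum_ite_eq' Finset.univ a, Finset.sum_ite_eq' Finset.univ b]
  norm_num

lemma TT_diag_pos (X : Finset (Submodule ℝ (EuclideanSpace ℝ (Fin d))))
    (hinv : ∀ g : Matrix (Fin d) (Fin d) ℝ, IsSignedPerm g →
      ∀ W ∈ X, Submodule.map (Matrix.toEuclideanLin g) W ∈ X)
    (a : Fin d) (W₀ : Submodule ℝ (EuclideanSpace ℝ (Fin d))) (hW₀ : W₀ ∈ X)
    (hrank : Module.finrank ℝ W₀ = 2) : 0 < TT X a a a a := by
  have hbot : W₀ ≠ ⊥ := by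
    intro h
    rw [h, finrank_bot] at hrank
    omega
  have hex : ∃ i, proj W₀ (ev i) ≠ 0 := by
    by_contra hcon
    push_neg at hcon
    apply hbot
    rw [Submodule.eq_bot_iff]
    intro w hw
    have hfix : proj W₀ w = w := by
      rw [proj_apply]
      have := Submodule.orthogonalProjectionOnto_mem_subspace_eq_self (K := W₀) ⟨w, hw⟩
      rw [this]
    have hzero : proj W₀ w = 0 := by
      conv_lhs => rw [basis_expand w]
      rw [map_sum]
      refine Finset.sum_eq_zero fun i _ => ?_
      rw [map_smul, hcon i, smul_zero]
    rw [← hfix, hzero]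
  obtain ⟨i, hi⟩ := hex
  have h1 : 0 < rr W₀ i i := by
    have : rr W₀ i i = ‖proj W₀ (ev i)‖ ^ 2 := (norm_proj_sq W₀ (ev i)).symm
    rw [this]
    exact pow_pos (norm_pos_iff.mpr hi) 2
  have h2 : rr W₀ i i * rr W₀ i i ≤ TT X i i i i := by
    unfold TT
    refine Finset.single_le_sum (f := fun W => rr W i i * rr W i i) (fun W _ => ?_) hW₀
    exact mul_self_nonneg _
  have h3 := TT_diag X hinv a i
  nlinarith

end Chunk8

section Chunk9
open Finset
variable {d : ℕ}

lemma key_iff (X : Finset (Submodule ℝ (EuclideanSpace ℝ (Fin d))))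
    (hne : X.Nonempty)
    (hdim : ∀ W ∈ X, Module.finrank ℝ W = 2)
    (hinv : ∀ g : Matrix (Fin d) (Fin d) ℝ, IsSignedPerm g →
      ∀ W ∈ X, Submodule.map (Matrix.toEuclideanLin g) W ∈ X)
    (a b : Fin d) (hab : a ≠ b) :
    (∃ A : ℝ, 0 < A ∧ ∀ x : EuclideanSpace ℝ (Fin d),
        ∑ W ∈ X, ‖proj W x‖ ^ 4 = A * ‖x‖ ^ 4) ↔
    ∑ W ∈ X, ‖proj W (ev a)‖ ^ 4 =
      ∑ W ∈ X, ‖proj W ((Real.sqrt 2)⁻¹ • (ev a + ev b))‖ ^ 4 := by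
  classical
  set c := TT X a a a a with hc
  set α := TT X a a b b with hα
  set β := TT X a b a b with hβ
  set u : EuclideanSpace ℝ (Fin d) := (Real.sqrt 2)⁻¹ • (ev a + ev b) with hu
  have hn4 : ∀ x : EuclideanSpace ℝ (Fin d), ‖x‖ ^ 4 = (∑ i, x i ^ 2) ^ 2 := by
    intro x
    have h42 : (4 : ℕ) = 2 * 2 := rfl
    rw [h42, pow_mul, norm_sq_eq]
  have hm1 : ∑ W ∈ X, ‖proj W (ev a)‖ ^ 4 = (α + 2 * β) + (c - α - 2 * β) := by
    rw [master X hinv a b hab (ev a), sum_pow_ev a 2 (by norm_num),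
      sum_pow_ev a 4 (by norm_num)]
    ring
  have hm2 : ∑ W ∈ X, ‖proj W u‖ ^ 4 = (α + 2 * β) + (c - α - 2 * β) / 2 := by
    rw [master X hinv a b hab u, hu, sum_sq_u a b hab, sum_pow4_u a b hab]
    ring
  constructor
  · rintro ⟨A, hA0, hA⟩
    have e1 := hA (ev a)
    have e2 := hA u
    rw [hn4, sum_pow_ev a 2 (by norm_num)] at e1
    rw [hn4, hu, sum_sq_u a b hab] at e2
    rw [hm1, hm2] at *
    rw [hm1] at e1
    rw [hm2] at e2
    rw [hm1, hm2]
    norm_num at e1 e2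
    linarith
  · intro h
    rw [hm1, hm2] at h
    have hγ : c - α - 2 * β = 0 := by linarith
    obtain ⟨W₀, hW₀⟩ := hne
    have hcpos : 0 < c := TT_diag_pos X hinv a W₀ hW₀ (hdim W₀ hW₀)
    refine ⟨c, hcpos, fun x => ?_⟩
    rw [master X hinv a b hab x, hn4 x, ← hc, ← hα, ← hβ]
    linear_combination ((∑ i, x i ^ 4) - (∑ i, x i ^ 2) ^ 2) * hγ

end Chunk9


/-- two-point test: a `B_d`-invariant finite nonempty set
`X ⊆ G_{2,d}` (`d ≥ 4`) is an equal-weight tight 2-fusion frame iff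
`∑_{W∈X} ‖P_W e₁‖⁴ = ∑_{W∈X} ‖P_W ((e₁+e₂)/√2)‖⁴`. -/
theorem stmt5 (d : ℕ) (hd : 4 ≤ d)
    (X : Finset (Submodule ℝ (EuclideanSpace ℝ (Fin d))))
    (hne : X.Nonempty)
    (hdim : ∀ W ∈ X, Module.finrank ℝ W = 2)
    (hinv : ∀ g : Matrix (Fin d) (Fin d) ℝ, IsSignedPerm g →
      ∀ W ∈ X, Submodule.map (Matrix.toEuclideanLin g) W ∈ X) :
    (∃ A : ℝ, 0 < A ∧ ∀ x : EuclideanSpace ℝ (Fin d),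
        ∑ W ∈ X, ‖proj W x‖ ^ 4 = A * ‖x‖ ^ 4) ↔
    ∑ W ∈ X, ‖proj W (EuclideanSpace.single (⟨0, by omega⟩ : Fin d) (1 : ℝ))‖ ^ 4 =
      ∑ W ∈ X, ‖proj W ((Real.sqrt 2)⁻¹ •
        (EuclideanSpace.single (⟨0, by omega⟩ : Fin d) (1 : ℝ) +
          EuclideanSpace.single (⟨1, by omega⟩ : Fin d) (1 : ℝ)))‖ ^ 4 := by
  have hab : (⟨0, by omega⟩ : Fin d) ≠ (⟨1, by omega⟩ : Fin d) := by
    intro h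
    simp only [Fin.mk.injEq] at h
    omega
  exact key_iff X hne hdim hinv _ _ hab
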